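/- Let X = (X₁, X₂) be a centered bivariate Gaussian vector with standard deviations σ₁, σ₂ > 0 and correlation r ∈ (−1, 1), and let q₁, q₂ > 0. Set c := min{(q₁/σ₁)(σ₂/q₂), (σ₁/q₁)(q₂/σ₂)}. Then inf_{v₁ ≥ q₁, v₂ ≥ q₂} ⟨v, Σ⁻¹ v⟩ = (min{σ₁/q₁, σ₂/q₂})^{-2} · (1 + 1_{r < c} · (c − r)²/(1 − r²)), where Σ is the covariance matrix of X. -/

import Mathlib

open Matrix

lemma core_qp (a b r : ℝ) (ha : 0 < a) (hb : 0 < b) (hab : a ≤ b)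
    (hr1 : -1 < r) (hr2 : r < 1) :
    sInf {x : ℝ | ∃ u v : ℝ, a ≤ u ∧ b ≤ v ∧ x = (u^2 - 2*r*u*v + v^2)/(1-r^2)} =
      b^2 * (1 + (if r < a/b then (a/b - r)^2/(1-r^2) else 0)) := by
  have hd : 0 < 1 - r^2 := by nlinarith
  by_cases hcase : r < a/b
  · have hrb : r*b < a := (lt_div_iff₀ hb).mp hcase
    have hra : r*a < b := lt_of_lt_of_le (by nlinarith) hab
    have hRHS : b^2 * (1 + (if r < a/b then (a/b - r)^2/(1-r^2) else 0))
        = (a^2 - 2*r*a*b + b^2)/(1-r^2) := by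
      rw [if_pos hcase]; field_simp; ring
    rw [hRHS]
    have hlow : ∀ x ∈ {x : ℝ | ∃ u v : ℝ, a ≤ u ∧ b ≤ v ∧ x = (u^2 - 2*r*u*v + v^2)/(1-r^2)},
        (a^2 - 2*r*a*b + b^2)/(1-r^2) ≤ x := by
      rintro x ⟨u, v, hu, hv, rfl⟩
      rw [div_le_div_iff_of_pos_right hd]
      nlinarith [mul_nonneg (sub_pos.2 hrb).le (sub_nonneg.2 hu),
        mul_nonneg (sub_pos.2 hra).le (sub_nonneg.2 hv),
        sq_nonneg (u - a - (v - b)),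
        mul_nonneg (mul_nonneg (by linarith : (0:ℝ) ≤ 1 - r) (sub_nonneg.2 hu)) (sub_nonneg.2 hv)]
    have hmem : (a^2 - 2*r*a*b + b^2)/(1-r^2) ∈
        {x : ℝ | ∃ u v : ℝ, a ≤ u ∧ b ≤ v ∧ x = (u^2 - 2*r*u*v + v^2)/(1-r^2)} :=
      ⟨a, b, le_refl a, le_refl b, rfl⟩
    exact le_antisymm (csInf_le ⟨_, hlow⟩ hmem) (le_csInf ⟨_, hmem⟩ hlow)
  · have hrb : a ≤ r*b := (div_le_iff₀ hb).mp (le_of_not_gt hcase)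
    have hRHS : b^2 * (1 + (if r < a/b then (a/b - r)^2/(1-r^2) else 0)) = b^2 := by
      rw [if_neg hcase]; ring
    rw [hRHS]
    have hlow : ∀ x ∈ {x : ℝ | ∃ u v : ℝ, a ≤ u ∧ b ≤ v ∧ x = (u^2 - 2*r*u*v + v^2)/(1-r^2)},
        b^2 ≤ x := by
      rintro x ⟨u, v, hu, hv, rfl⟩
      rw [le_div_iff₀ hd]
      nlinarith [sq_nonneg (u - r*v),
        mul_nonneg (mul_nonneg (sub_nonneg.2 hv) (by linarith : (0:ℝ) ≤ v + b)) hd.le]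
    have hmem : b^2 ∈ {x : ℝ | ∃ u v : ℝ, a ≤ u ∧ b ≤ v ∧ x = (u^2 - 2*r*u*v + v^2)/(1-r^2)} := by
      refine ⟨r*b, b, hrb, le_refl b, ?_⟩
      field_simp
      ring
    exact le_antisymm (csInf_le ⟨b^2, hlow⟩ hmem) (le_csInf ⟨_, hmem⟩ hlow)

lemma set_swap (a b r : ℝ) :
    {x : ℝ | ∃ u v : ℝ, a ≤ u ∧ b ≤ v ∧ x = (u^2 - 2*r*u*v + v^2)/(1-r^2)} =
    {x : ℝ | ∃ u v : ℝ, b ≤ u ∧ a ≤ v ∧ x = (u^2 - 2*r*u*v + v^2)/(1-r^2)} := by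
  ext x
  constructor <;> rintro ⟨u, v, h1, h2, rfl⟩ <;> exact ⟨v, u, h2, h1, by ring⟩

theorem bivariate_quadratic_program (σ₁ σ₂ q₁ q₂ r : ℝ)
    (hσ₁ : 0 < σ₁) (hσ₂ : 0 < σ₂) (hq₁ : 0 < q₁) (hq₂ : 0 < q₂)
    (hr : r ∈ Set.Ioo (-1 : ℝ) 1)
    (Sig : Matrix (Fin 2) (Fin 2) ℝ)
    (hSig : Sig = !![σ₁ ^ 2, r * σ₁ * σ₂; r * σ₁ * σ₂, σ₂ ^ 2])
    (c : ℝ) (hc : c = min ((q₁ / σ₁) * (σ₂ / q₂)) ((σ₁ / q₁) * (q₂ / σ₂))) :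
    sInf {x : ℝ | ∃ v : Fin 2 → ℝ, q₁ ≤ v 0 ∧ q₂ ≤ v 1 ∧ x = v ⬝ᵥ Sig⁻¹.mulVec v} =
    ((min (σ₁ / q₁) (σ₂ / q₂)) ^ 2)⁻¹ *
      (1 + (if r < c then (c - r) ^ 2 / (1 - r ^ 2) else 0)) := by
  obtain ⟨hr1, hr2⟩ := hr
  have hd : 0 < 1 - r^2 := by nlinarith
  have hD : σ₁^2 * σ₂^2 * (1 - r^2) ≠ 0 := by positivity
  set B : Matrix (Fin 2) (Fin 2) ℝ :=
    (σ₁^2 * σ₂^2 * (1 - r^2))⁻¹ • !![σ₂^2, -(r*σ₁*σ₂); -(r*σ₁*σ₂), σ₁^2] with hBdef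
  have hinv : Sig⁻¹ = B := by
    apply inv_eq_right_inv
    subst hSig
    ext i j
    fin_cases i <;> fin_cases j <;>
      simp [hBdef, Matrix.mul_apply, Fin.sum_univ_two, Matrix.one_apply] <;>
      field_simp <;> ring
  have hquad : ∀ v : Fin 2 → ℝ, v ⬝ᵥ Sig⁻¹.mulVec v =
      ((v 0/σ₁)^2 - 2*r*(v 0/σ₁)*(v 1/σ₂) + (v 1/σ₂)^2)/(1-r^2) := by
    intro v
    rw [hinv, hBdef]
    simp [Matrix.mulVec, dotProduct, Fin.sum_univ_two]
    field_simp
    ring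
  have ha : 0 < q₁/σ₁ := by positivity
  have hb : 0 < q₂/σ₂ := by positivity
  have hset : {x : ℝ | ∃ v : Fin 2 → ℝ, q₁ ≤ v 0 ∧ q₂ ≤ v 1 ∧ x = v ⬝ᵥ Sig⁻¹.mulVec v} =
      {x : ℝ | ∃ u w : ℝ, q₁/σ₁ ≤ u ∧ q₂/σ₂ ≤ w ∧ x = (u^2 - 2*r*u*w + w^2)/(1-r^2)} := by
    ext x
    constructor
    · rintro ⟨v, h1, h2, rfl⟩
      exact ⟨v 0/σ₁, v 1/σ₂, by rwa [div_le_div_iff_of_pos_right hσ₁],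
        by rwa [div_le_div_iff_of_pos_right hσ₂], hquad v⟩
    · rintro ⟨u, w, h1, h2, rfl⟩
      refine ⟨![σ₁*u, σ₂*w], ?_, ?_, ?_⟩
      · simpa using (div_le_iff₀' hσ₁).mp h1
      · simpa using (div_le_iff₀' hσ₂).mp h2
      · rw [hquad]
        simp
        rw [mul_div_cancel_left₀ _ hσ₁.ne', mul_div_cancel_left₀ _ hσ₂.ne']
  rw [hset]
  rcases le_total (q₁/σ₁) (q₂/σ₂) with hab | hab
  · rw [core_qp _ _ r ha hb hab hr1 hr2]
    have hc' : c = (q₁/σ₁)/(q₂/σ₂) := by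
      have hab' : q₁ * σ₂ ≤ q₂ * σ₁ := (div_le_div_iff₀ hσ₁ hσ₂).mp hab
      rw [hc, min_eq_left]
      · field_simp
      · rw [div_mul_div_comm, div_mul_div_comm,
          div_le_div_iff₀ (by positivity) (by positivity)]
        nlinarith [mul_le_mul hab' hab' (by positivity : (0:ℝ) ≤ q₁ * σ₂) (by positivity : (0:ℝ) ≤ q₂ * σ₁)]
    have hmin : min (σ₁/q₁) (σ₂/q₂) = σ₂/q₂ := by
      apply min_eq_right
      rw [div_le_div_iff₀ hq₂ hq₁]
      have := (div_le_div_iff₀ hσ₁ hσ₂).mp hab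
      linarith
    rw [hc', hmin]
    field_simp
  · rw [set_swap, core_qp _ _ r hb ha hab hr1 hr2]
    have hc' : c = (q₂/σ₂)/(q₁/σ₁) := by
      have hab' : q₂ * σ₁ ≤ q₁ * σ₂ := (div_le_div_iff₀ hσ₂ hσ₁).mp hab
      rw [hc, min_eq_right]
      · field_simp
      · rw [div_mul_div_comm, div_mul_div_comm,
          div_le_div_iff₀ (by positivity) (by positivity)]
        nlinarith [mul_le_mul hab' hab' (by positivity : (0:ℝ) ≤ q₂ * σ₁) (by positivity : (0:ℝ) ≤ q₁ * σ₂)]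
    have hmin : min (σ₁/q₁) (σ₂/q₂) = σ₁/q₁ := by
      apply min_eq_left
      rw [div_le_div_iff₀ hq₁ hq₂]
      have := (div_le_div_iff₀ hσ₂ hσ₁).mp hab
      linarith
    rw [hc', hmin]
    field_simp
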